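/- For any non-integer real number s ≥ 1, one has ∑_{i=0}^{⌊s⌋+1} C(s,i) < 2^s + 1/(4(s+1)), where C(s,i) = s(s−1)···(s−i+1)/i! is the generalized binomial coefficient (with C(s,0) = 1). -/

import Mathlib

open Finset

private lemma hasDerivAt_one_add_rpow (p : ℝ) {x : ℝ} (hx : 0 < 1 + x) :
    HasDerivAt (fun y : ℝ => (1 + y) ^ p) (p * (1 + x) ^ (p - 1)) x := by
  have h := (Real.hasDerivAt_rpow_const (x := 1 + x) (p := p) (Or.inl hx.ne')).comp x
      ((hasDerivAt_id x).const_add 1)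
  simpa [Function.comp_def] using h

private lemma iterDeriv_one_add_rpow (s : ℝ) :
    ∀ (k : ℕ), ∀ x ∈ Set.Icc (0:ℝ) 1,
      iteratedDerivWithin k (fun y : ℝ => (1 + y) ^ s) (Set.Icc (0:ℝ) 1) x
        = (∏ j ∈ Finset.range k, (s - j)) * (1 + x) ^ (s - k) := by
  intro k
  induction k with
  | zero => intro x hx; simp
  | succ k ih =>
    intro x hx
    have hu : UniqueDiffWithinAt ℝ (Set.Icc (0:ℝ) 1) x := uniqueDiffOn_Icc one_pos x hx
    have h1x : 0 < 1 + x := by have := hx.1; linarith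
    have hd : HasDerivAt (fun y : ℝ => (∏ j ∈ Finset.range k, (s - j)) * (1 + y) ^ (s - k))
        ((∏ j ∈ Finset.range k, (s - j)) * ((s - k) * (1 + x) ^ (s - k - 1))) x :=
      (hasDerivAt_one_add_rpow (s - k) h1x).const_mul _
    rw [iteratedDerivWithin_succ,
      derivWithin_congr (fun y hy => ih y hy) (ih x hx),
      hd.hasDerivWithinAt.derivWithin hu, Finset.prod_range_succ]
    have he : s - (k + 1 : ℕ) = s - k - 1 := by push_cast; ring
    rw [he]; ring

private lemma prod_desc_factorial (n : ℕ) :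
    ∏ j ∈ Finset.range n, ((n : ℝ) + 1 - j) = Nat.factorial (n + 1) := by
  induction n with
  | zero => simp
  | succ n ih =>
    rw [Finset.prod_range_succ']
    have h : ∀ j ∈ Finset.range n,
        ((n + 1 : ℕ) : ℝ) + 1 - ((j + 1 : ℕ) : ℝ) = (n : ℝ) + 1 - j := by
      intro j _; push_cast; ring
    rw [Finset.prod_congr rfl h, ih]
    rw [Nat.factorial_succ (n + 1)]
    push_cast
    ring

theorem sum_generalized_binomial_lt (s : ℝ) (hs : 1 ≤ s)
    (hnonint : ∀ n : ℤ, (n : ℝ) ≠ s) :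
    ∑ i ∈ Finset.range (⌊s⌋₊ + 2), (∏ j ∈ Finset.range i, (s - j)) / (Nat.factorial i)
      < 2 ^ s + 1 / (4 * (s + 1)) := by
  set n := ⌊s⌋₊ with hn
  have hns : (n : ℝ) < s := by
    have h1 : (n : ℝ) ≤ s := Nat.floor_le (by linarith)
    have h2 : (n : ℝ) ≠ s := by
      have := hnonint (n : ℤ)
      push_cast at this
      exact this
    exact lt_of_le_of_ne h1 h2
  have hsn : s < n + 1 := Nat.lt_floor_add_one s
  set f : ℝ → ℝ := fun y => (1 + y) ^ s with hf
  -- smoothness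
  have hcd : ContDiffOn ℝ (n + 1 : ℕ) f (Set.Icc (0:ℝ) 1) := by
    intro x hx
    have h1x : (0:ℝ) < 1 + x := by have := hx.1; linarith
    exact ((Real.contDiffAt_rpow_const_of_ne h1x.ne').comp x
      ((contDiff_const.add contDiff_id).contDiffAt)).contDiffWithinAt
  have hdiff : DifferentiableOn ℝ
      (iteratedDerivWithin (n + 1) f (Set.Icc (0:ℝ) 1)) (Set.Ioo (0:ℝ) 1) := by
    apply DifferentiableOn.congr (f := fun y : ℝ =>
      (∏ j ∈ Finset.range (n + 1), (s - j)) * (1 + y) ^ (s - (n + 1 : ℕ)))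
    · intro x hx
      have h1x : (0:ℝ) < 1 + x := by have := hx.1; linarith
      exact (hasDerivAt_one_add_rpow (s - (n + 1 : ℕ)) h1x).differentiableAt.const_mul
        _ |>.differentiableWithinAt
    · intro x hx
      exact iterDeriv_one_add_rpow s (n + 1) x (Set.Ioo_subset_Icc_self hx)
  obtain ⟨x', hx', hR⟩ := taylor_mean_remainder_lagrange (f := f) (x₀ := 0) (x := 1)
    (n := n + 1) (by norm_num) (by rw [Set.uIcc_of_le zero_le_one]; exact hcd)
    (by rw [Set.uIcc_of_le zero_le_one, Set.uIoo_of_le zero_le_one]; exact hdiff)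
  rw [Set.uIcc_of_le zero_le_one] at hR
  rw [Set.uIoo_of_le zero_le_one] at hx'
  -- compute the Taylor polynomial
  have htaylor : taylorWithinEval f (n + 1) (Set.Icc (0:ℝ) 1) 0 1
      = ∑ i ∈ Finset.range (n + 2), (∏ j ∈ Finset.range i, (s - j)) / (Nat.factorial i) := by
    rw [taylor_within_apply]
    apply Finset.sum_congr rfl
    intro k hk
    rw [iterDeriv_one_add_rpow s k 0 (by norm_num)]
    simp [Real.one_rpow]
    rw [div_eq_inv_mul]
  have hf1 : f 1 = 2 ^ s := by norm_num [hf]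
  -- the remainder
  have hiter : iteratedDerivWithin (n + 2) f (Set.Icc (0:ℝ) 1) x'
      = (∏ j ∈ Finset.range (n + 2), (s - j)) * (1 + x') ^ (s - (n + 2 : ℕ)) :=
    iterDeriv_one_add_rpow s (n + 2) x' (Set.Ioo_subset_Icc_self hx')
  rw [htaylor, hf1, hiter] at hR
  have h10 : ((1:ℝ) - 0) ^ (n + 1 + 1) = 1 := by norm_num
  rw [h10, mul_one] at hR
  set P := ∏ j ∈ Finset.range (n + 2), (s - (j:ℝ)) with hP
  set r := (1 + x') ^ (s - ((n + 2 : ℕ) : ℝ)) with hr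
  set F := ((n + 1 + 1).factorial : ℝ) with hF
  have hFpos : (0:ℝ) < F := by positivity
  -- sign and size estimates
  have hprodpos : 0 < ∏ j ∈ Finset.range (n + 1), (s - (j:ℝ)) := by
    apply Finset.prod_pos
    intro j hj
    have : (j : ℝ) ≤ n := by
      exact_mod_cast Nat.cast_le.mpr (Nat.lt_succ_iff.mp (Finset.mem_range.mp hj))
    linarith
  have hsplit : P = (∏ j ∈ Finset.range (n + 1), (s - (j:ℝ))) * (s - ((n:ℝ) + 1)) := by
    rw [hP, Finset.prod_range_succ]; push_cast; ring
  have hrlt : r < 1 := by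
    apply Real.rpow_lt_one_of_one_lt_of_neg
    · have := hx'.1; linarith
    · push_cast; linarith
  have hrpos : (0:ℝ) < r := Real.rpow_pos_of_pos (by have := hx'.1; linarith) _
  have hPneg : P < 0 := by
    rw [hsplit]
    exact mul_neg_of_pos_of_neg hprodpos (by linarith)
  -- bound the product
  have hprodle : ∏ j ∈ Finset.range (n + 1), (s - (j:ℝ))
      ≤ ((n + 1).factorial : ℝ) * (s - n) := by
    rw [Finset.prod_range_succ]
    have hle : ∏ j ∈ Finset.range n, (s - (j:ℝ))
        ≤ ∏ j ∈ Finset.range n, ((n : ℝ) + 1 - j) := by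
      apply Finset.prod_le_prod
      · intro j hj
        have hjn : j + 1 ≤ n := Finset.mem_range.mp hj
        have : ((j : ℝ) + 1) ≤ n := by exact_mod_cast hjn
        linarith
      · intro j _; linarith
    rw [prod_desc_factorial] at hle
    have : 0 < s - (n : ℝ) := by linarith
    nlinarith
  have key : -(P * r) < 1 / (4 * (s + 1)) * F := by
    have h1 : -(P * r) < -P := by nlinarith
    have h2 : -P ≤ ((n + 1).factorial : ℝ) * (s - n) * (((n:ℝ) + 1) - s) := by
      rw [hsplit]
      have h1t : 0 < (n + 1 : ℝ) - s := by linarith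
      nlinarith
    have h3 : ((n + 1).factorial : ℝ) * (s - n) * (((n:ℝ) + 1) - s)
        ≤ ((n + 1).factorial : ℝ) * (1 / 4) := by
      have hfp : (0:ℝ) < ((n + 1).factorial : ℝ) := by positivity
      nlinarith [sq_nonneg (s - n - 1/2)]
    have h4 : ((n + 1).factorial : ℝ) * (1 / 4) < 1 / (4 * (s + 1)) * F := by
      have hfac : F = ((n:ℝ) + 2) * ((n + 1).factorial : ℝ) := by
        rw [hF, Nat.factorial_succ (n + 1)]; push_cast; ring
      rw [hfac]
      have hfp : (0:ℝ) < ((n + 1).factorial : ℝ) := by positivity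
      have hsp : (0:ℝ) < s + 1 := by linarith
      rw [div_mul_eq_mul_div, one_mul, lt_div_iff₀ (by positivity)]
      nlinarith
    linarith
  have hfin : -(P * r) / F < 1 / (4 * (s + 1)) := by
    rw [div_lt_iff₀ hFpos]; linarith
  have heq : -(P * r) / F = -(P * r / F) := neg_div _ _
  linarith
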